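/- Let H ⊆ ℝ be a bounded, countably infinite set. Then MS^a(H) = [liminf H, limsup H]; that is, a real number x is the limit of the arithmetic means A(H_n) of some approximating sequence (H_n) for H if and only if liminf H ≤ x ≤ limsup H. -/

import Mathlib

open Filter Topology

/-- The set of accumulation points of `H`. -/
def accPts (H : Set ℝ) : Set ℝ := {x | AccPt x (𝓟 H)}

/-- Arithmetic mean of a finite set of reals. -/
noncomputable def finsetMean (F : Finset ℝ) : ℝ := (∑ x ∈ F, x) / F.card

lemma accPts_subset_closure (H : Set ℝ) : accPts H ⊆ closure H := by
  intro x hx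
  rw [mem_closure_iff_clusterPt]
  exact hx.clusterPt

lemma isClosed_accPts (H : Set ℝ) : IsClosed (accPts H) := by
  have : accPts H = derivedSet H := rfl
  rw [this]; exact isClosed_derivedSet H

lemma accPts_nonempty (H : Set ℝ) (hbd : Bornology.IsBounded H) (hi : H.Infinite) :
    (accPts H).Nonempty := by
  obtain ⟨x, -, hx⟩ := hi.exists_accPt_of_subset_isCompact
    (Metric.isCompact_of_isClosed_isBounded isClosed_closure hbd.closure) subset_closure
  exact ⟨x, hx⟩

lemma accPts_bdd (H : Set ℝ) (hbd : Bornology.IsBounded H) :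
    Bornology.IsBounded (accPts H) :=
  hbd.closure.subset (accPts_subset_closure H)

lemma exists_near (H : Set ℝ) {p : ℝ} (hp : p ∈ accPts H) {U : Set ℝ} (hU : U ∈ 𝓝 p)
    (G : Finset ℝ) : ∃ c, c ∈ H ∧ c ∈ U ∧ c ∉ G := by
  have hU' : U \ ↑(G.erase p) ∈ 𝓝 p := by
    apply Filter.inter_mem hU
    refine IsOpen.mem_nhds ?_ ?_
    · exact (G.erase p).finite_toSet.isClosed.isOpen_compl
    · simp [Finset.mem_erase]
      exact fun _ => rfl
  obtain ⟨y, ⟨hyU, hyH⟩, hyp⟩ := (accPt_iff_nhds (x := p) (C := H)).mp hp _ hU'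
  refine ⟨y, hyH, hyU.1, fun hyG => hyU.2 ?_⟩
  exact Finset.mem_coe.mpr (Finset.mem_erase.mpr ⟨hyp, hyG⟩)

lemma corrector_up (H : Set ℝ) (M x p δ : ℝ) (hδ : 0 < δ) (hMpos : 0 < M)
    (hM : ∀ y ∈ H, |y| ≤ M) (hxM : |x| ≤ M)
    (hp : p ∈ accPts H) (hpx : p ≤ x) :
    ∀ (k : ℕ) (G : Finset ℝ), ↑G ⊆ H → 2 * M ≤ G.card * δ →
      x - δ ≤ finsetMean G →
      (∑ y ∈ G, y) - (x + δ) * G.card ≤ k * (δ / 2) →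
      ∃ G', G ⊆ G' ∧ ↑G' ⊆ H ∧ x - δ ≤ finsetMean G' ∧ finsetMean G' ≤ x + δ := by
  intro k
  induction k with
  | zero =>
    intro G hGH hcard hlow hq
    have hN : (0:ℝ) < G.card := by nlinarith
    exact ⟨G, subset_rfl, hGH, hlow, by
      rw [finsetMean, div_le_iff₀ hN]; push_cast at hq ⊢; linarith⟩
  | succ k ih =>
    intro G hGH hcard hlow hq
    have hN : (0:ℝ) < G.card := by nlinarith
    by_cases hup : finsetMean G ≤ x + δ
    · exact ⟨G, subset_rfl, hGH, hlow, hup⟩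
    push_neg at hup
    have hS : (x + δ) * G.card < ∑ y ∈ G, y := by
      rw [finsetMean, lt_div_iff₀ hN] at hup; linarith
    obtain ⟨c, hcH, hcU, hcG⟩ := exists_near H hp
      (Metric.ball_mem_nhds p (by positivity : (0:ℝ) < δ/2)) G
    have hcp : |c - p| < δ / 2 := by simpa [Real.dist_eq] using hcU
    have hcle : c ≤ x + δ / 2 := by
      have := abs_lt.mp hcp; linarith
    have hcM : |c| ≤ M := hM c hcH
    have hcge : -M ≤ c := (abs_le.mp hcM).1
    have hxle : x ≤ M := (abs_le.mp hxM).2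
    have hcard' : (insert c G).card = G.card + 1 := Finset.card_insert_of_notMem hcG
    have hsum' : ∑ y ∈ insert c G, y = c + ∑ y ∈ G, y := Finset.sum_insert hcG
    have hlow' : x - δ ≤ finsetMean (insert c G) := by
      rw [finsetMean, le_div_iff₀ (by rw [hcard']; push_cast; linarith), hcard', hsum']
      push_cast
      nlinarith
    obtain ⟨G', h1, h2, h3, h4⟩ := ih (insert c G)
      (by rw [Finset.coe_insert]; exact Set.insert_subset hcH hGH)
      (by rw [hcard']; push_cast; nlinarith)
      hlow'
      (by rw [hcard', hsum']; push_cast at hq ⊢; linarith)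
    exact ⟨G', (Finset.subset_insert c G).trans h1, h2, h3, h4⟩

lemma corrector_down (H : Set ℝ) (M x q δ : ℝ) (hδ : 0 < δ) (hMpos : 0 < M)
    (hM : ∀ y ∈ H, |y| ≤ M) (hxM : |x| ≤ M)
    (hq' : q ∈ accPts H) (hqx : x ≤ q) :
    ∀ (k : ℕ) (G : Finset ℝ), ↑G ⊆ H → 2 * M ≤ G.card * δ →
      finsetMean G ≤ x + δ →
      (x - δ) * G.card - (∑ y ∈ G, y) ≤ k * (δ / 2) →
      ∃ G', G ⊆ G' ∧ ↑G' ⊆ H ∧ x - δ ≤ finsetMean G' ∧ finsetMean G' ≤ x + δ := by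
  intro k
  induction k with
  | zero =>
    intro G hGH hcard hhigh hqm
    have hN : (0:ℝ) < G.card := by nlinarith
    exact ⟨G, subset_rfl, hGH, by
      rw [finsetMean, le_div_iff₀ hN]; push_cast at hqm ⊢; linarith, hhigh⟩
  | succ k ih =>
    intro G hGH hcard hhigh hqm
    have hN : (0:ℝ) < G.card := by nlinarith
    by_cases hlo : x - δ ≤ finsetMean G
    · exact ⟨G, subset_rfl, hGH, hlo, hhigh⟩
    push_neg at hlo
    have hS : ∑ y ∈ G, y < (x - δ) * G.card := by
      rw [finsetMean, div_lt_iff₀ hN] at hlo; linarith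
    obtain ⟨c, hcH, hcU, hcG⟩ := exists_near H hq'
      (Metric.ball_mem_nhds q (by positivity : (0:ℝ) < δ/2)) G
    have hcp : |c - q| < δ / 2 := by simpa [Real.dist_eq] using hcU
    have hcge : x - δ / 2 ≤ c := by
      have := abs_lt.mp hcp; linarith
    have hcM : |c| ≤ M := hM c hcH
    have hcle : c ≤ M := (abs_le.mp hcM).2
    have hxge : -M ≤ x := (abs_le.mp hxM).1
    have hcard' : (insert c G).card = G.card + 1 := Finset.card_insert_of_notMem hcG
    have hsum' : ∑ y ∈ insert c G, y = c + ∑ y ∈ G, y := Finset.sum_insert hcG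
    have hhigh' : finsetMean (insert c G) ≤ x + δ := by
      rw [finsetMean, div_le_iff₀ (by rw [hcard']; push_cast; linarith), hcard', hsum']
      push_cast
      nlinarith
    obtain ⟨G', h1, h2, h3, h4⟩ := ih (insert c G)
      (by rw [Finset.coe_insert]; exact Set.insert_subset hcH hGH)
      (by rw [hcard']; push_cast; nlinarith)
      hhigh'
      (by rw [hcard', hsum']; push_cast at hqm ⊢; linarith)
    exact ⟨G', (Finset.subset_insert c G).trans h1, h2, h3, h4⟩

lemma corrector (H : Set ℝ) (M x p q δ : ℝ) (hδ : 0 < δ) (hMpos : 0 < M)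
    (hM : ∀ y ∈ H, |y| ≤ M) (hxM : |x| ≤ M)
    (hp : p ∈ accPts H) (hpx : p ≤ x) (hq' : q ∈ accPts H) (hqx : x ≤ q)
    (G : Finset ℝ) (hGH : ↑G ⊆ H) (hcard : 2 * M ≤ G.card * δ) :
    ∃ G', G ⊆ G' ∧ ↑G' ⊆ H ∧ x - δ ≤ finsetMean G' ∧ finsetMean G' ≤ x + δ := by
  by_cases hlo : x - δ ≤ finsetMean G
  · refine corrector_up H M x p δ hδ hMpos hM hxM hp hpx
      ⌈((∑ y ∈ G, y) - (x + δ) * G.card) * 2 / δ⌉₊ G hGH hcard hlo ?_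
    by_cases hpos : 0 ≤ ((∑ y ∈ G, y) - (x + δ) * G.card)
    · have := Nat.le_ceil (((∑ y ∈ G, y) - (x + δ) * G.card) * 2 / δ)
      rw [div_le_iff₀ hδ] at this
      linarith
    · push_neg at hpos
      have : (0:ℝ) ≤ (⌈((∑ y ∈ G, y) - (x + δ) * G.card) * 2 / δ⌉₊ : ℝ) * (δ/2) := by
        positivity
      linarith
  · push_neg at hlo
    refine corrector_down H M x q δ hδ hMpos hM hxM hq' hqx
      ⌈((x - δ) * G.card - ∑ y ∈ G, y) * 2 / δ⌉₊ G hGH hcard (le_of_lt (by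
        have hN : (0:ℝ) < G.card := by nlinarith
        calc finsetMean G < x - δ := hlo
        _ ≤ x + δ := by linarith)) ?_
    by_cases hpos : 0 ≤ ((x - δ) * G.card - ∑ y ∈ G, y)
    · have := Nat.le_ceil (((x - δ) * G.card - ∑ y ∈ G, y) * 2 / δ)
      rw [div_le_iff₀ hδ] at this
      linarith
    · push_neg at hpos
      have : (0:ℝ) ≤ (⌈((x - δ) * G.card - ∑ y ∈ G, y) * 2 / δ⌉₊ : ℝ) * (δ/2) := by
        positivity
      linarith

lemma outliers_finite (H : Set ℝ) (hbd : Bornology.IsBounded H)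
    {a b ε : ℝ} (hε : 0 < ε)
    (ha : ∀ z ∈ accPts H, a ≤ z) (hb : ∀ z ∈ accPts H, z ≤ b) :
    {y ∈ H | y < a - ε ∨ b + ε < y}.Finite := by
  by_contra hinf
  rw [← Set.Infinite] at hinf
  obtain ⟨z, -, hz⟩ := hinf.exists_accPt_of_subset_isCompact
    (Metric.isCompact_of_isClosed_isBounded isClosed_closure hbd.closure)
    ((Set.sep_subset _ _).trans subset_closure)
  have hzH : z ∈ accPts H := hz.mono (principal_mono.2 (Set.sep_subset _ _))
  have h1 : a ≤ z := ha z hzH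
  have h2 : z ≤ b := hb z hzH
  have hzc : z ∈ closure {y ∈ H | y < a - ε ∨ b + ε < y} := by
    rw [mem_closure_iff_clusterPt]; exact hz.clusterPt
  have hsub : {y ∈ H | y < a - ε ∨ b + ε < y} ⊆ Set.Iio (a - ε) ∪ Set.Ioi (b + ε) :=
    fun y hy => hy.2.imp id id
  have := closure_mono hsub hzc
  rw [closure_union] at this
  rcases this with h | h
  · have : z ≤ a - ε := by
      have := closure_mono (Set.Iio_subset_Iic_self (a := a - ε)) h
      rwa [IsClosed.closure_eq isClosed_Iic] at this
    linarith
  · have : b + ε ≤ z := by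
      have := closure_mono (Set.Ioi_subset_Ici_self (a := b + ε)) h
      rwa [IsClosed.closure_eq isClosed_Ici] at this
    linarith

lemma sum_lb (G T : Finset ℝ) (L M : ℝ) (hL : ∀ y ∈ G, y ∉ T → L ≤ y)
    (hM : ∀ y ∈ G, -M ≤ y) (hMnn : 0 ≤ M) :
    L * G.card - T.card * (|L| + M) ≤ ∑ y ∈ G, y := by
  classical
  have hsplit : ∑ y ∈ G.filter (· ∈ T), y + ∑ y ∈ G.filter (· ∉ T), y = ∑ y ∈ G, y :=
    Finset.sum_filter_add_sum_filter_not _ _ _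
  have hcards : (G.filter (· ∈ T)).card + (G.filter (· ∉ T)).card = G.card :=
    Finset.card_filter_add_card_filter_not _
  have hA : (G.filter (· ∈ T)).card ≤ T.card :=
    Finset.card_le_card (fun y hy => (Finset.mem_filter.mp hy).2)
  have hB : (G.filter (· ∉ T)).card • L ≤ ∑ y ∈ G.filter (· ∉ T), y :=
    Finset.card_nsmul_le_sum _ _ _ (fun y hy =>
      hL y (Finset.mem_filter.mp hy).1 (Finset.mem_filter.mp hy).2)
  have hA' : (G.filter (· ∈ T)).card • (-M) ≤ ∑ y ∈ G.filter (· ∈ T), y :=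
    Finset.card_nsmul_le_sum _ _ _ (fun y hy => hM y (Finset.mem_filter.mp hy).1)
  rw [nsmul_eq_mul] at hB hA'
  have hc1 : (0:ℝ) ≤ (G.filter (· ∈ T)).card := by positivity
  have hc2 : ((G.filter (· ∈ T)).card : ℝ) ≤ T.card := by exact_mod_cast hA
  have hc3 : ((G.filter (· ∈ T)).card : ℝ) + ((G.filter (· ∉ T)).card : ℝ) = G.card := by
    exact_mod_cast hcards
  have habs : L ≤ |L| := le_abs_self L
  have habs2 : -|L| ≤ L := neg_abs_le L
  have h1 : ((G.filter (· ∈ T)).card : ℝ) * L ≤ ((G.filter (· ∈ T)).card : ℝ) * |L| :=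
    mul_le_mul_of_nonneg_left habs hc1
  have h2 : ((G.filter (· ∈ T)).card : ℝ) * |L| ≤ (T.card : ℝ) * |L| :=
    mul_le_mul_of_nonneg_right hc2 (abs_nonneg L)
  have h3 : ((G.filter (· ∈ T)).card : ℝ) * M ≤ (T.card : ℝ) * M :=
    mul_le_mul_of_nonneg_right hc2 hMnn
  nlinarith

lemma sum_ub (G T : Finset ℝ) (U M : ℝ) (hU : ∀ y ∈ G, y ∉ T → y ≤ U)
    (hM : ∀ y ∈ G, y ≤ M) (hMnn : 0 ≤ M) :
    ∑ y ∈ G, y ≤ U * G.card + T.card * (|U| + M) := by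
  classical
  have hsplit : ∑ y ∈ G.filter (· ∈ T), y + ∑ y ∈ G.filter (· ∉ T), y = ∑ y ∈ G, y :=
    Finset.sum_filter_add_sum_filter_not _ _ _
  have hcards : (G.filter (· ∈ T)).card + (G.filter (· ∉ T)).card = G.card :=
    Finset.card_filter_add_card_filter_not _
  have hA : (G.filter (· ∈ T)).card ≤ T.card :=
    Finset.card_le_card (fun y hy => (Finset.mem_filter.mp hy).2)
  have hB : ∑ y ∈ G.filter (· ∉ T), y ≤ (G.filter (· ∉ T)).card • U :=
    Finset.sum_le_card_nsmul _ _ _ (fun y hy =>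
      hU y (Finset.mem_filter.mp hy).1 (Finset.mem_filter.mp hy).2)
  have hA' : ∑ y ∈ G.filter (· ∈ T), y ≤ (G.filter (· ∈ T)).card • M :=
    Finset.sum_le_card_nsmul _ _ _ (fun y hy => hM y (Finset.mem_filter.mp hy).1)
  rw [nsmul_eq_mul] at hB hA'
  have hc1 : (0:ℝ) ≤ (G.filter (· ∈ T)).card := by positivity
  have hc2 : ((G.filter (· ∈ T)).card : ℝ) ≤ T.card := by exact_mod_cast hA
  have hc3 : ((G.filter (· ∈ T)).card : ℝ) + ((G.filter (· ∉ T)).card : ℝ) = G.card := by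
    exact_mod_cast hcards
  have habs : -U ≤ |U| := neg_le_abs U
  have h1 : ((G.filter (· ∈ T)).card : ℝ) * (-U) ≤ ((G.filter (· ∈ T)).card : ℝ) * |U| :=
    mul_le_mul_of_nonneg_left habs hc1
  have h2 : ((G.filter (· ∈ T)).card : ℝ) * |U| ≤ (T.card : ℝ) * |U| :=
    mul_le_mul_of_nonneg_right hc2 (abs_nonneg U)
  have h3 : ((G.filter (· ∈ T)).card : ℝ) * M ≤ (T.card : ℝ) * M :=
    mul_le_mul_of_nonneg_right hc2 hMnn
  nlinarith
    [mul_comm U ((G.filter (· ∉ T)).card : ℝ),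
     (by rw [hc3] : U * (((G.filter (· ∈ T)).card : ℝ) + ((G.filter (· ∉ T)).card : ℝ)) = U * G.card),
     mul_add U ((G.filter (· ∈ T)).card : ℝ) ((G.filter (· ∉ T)).card : ℝ)]

/-- `MS^a(H) = [liminf H, limsup H]` for a bounded countably
infinite set `H`. -/
theorem msa_eq_Icc (H : Set ℝ) (hbd : Bornology.IsBounded H)
    (hc : H.Countable) (hi : H.Infinite) :
    {x : ℝ | ∃ Hn : ℕ → Finset ℝ,
        (∀ n, Hn n ⊆ Hn (n + 1)) ∧ (⋃ n, (Hn n : Set ℝ)) = H ∧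
        Tendsto (fun n => finsetMean (Hn n)) atTop (𝓝 x)} =
      Set.Icc (sInf (accPts H)) (sSup (accPts H)) := by
  classical
  obtain ⟨C, hC⟩ := (isBounded_iff_forall_norm_le).mp hbd
  set M : ℝ := |C| + 1 with hMdef
  have hMpos : 0 < M := by positivity
  have hM : ∀ y ∈ H, |y| ≤ M := fun y hy => by
    have := hC y hy; rw [Real.norm_eq_abs] at this
    calc |y| ≤ C := this
    _ ≤ |C| := le_abs_self C
    _ ≤ M := by rw [hMdef]; linarith
  have hclos : ∀ z ∈ closure H, |z| ≤ M := by
    intro z hz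
    have : closure H ⊆ {w : ℝ | |w| ≤ M} :=
      closure_minimal hM (isClosed_le (by continuity) continuous_const)
    exact this hz
  have hne : (accPts H).Nonempty := accPts_nonempty H hbd hi
  have hcl : IsClosed (accPts H) := isClosed_accPts H
  have hbb : Bornology.IsBounded (accPts H) := accPts_bdd H hbd
  have hbddB : BddBelow (accPts H) := hbb.bddBelow
  have hbddA : BddAbove (accPts H) := hbb.bddAbove
  set a : ℝ := sInf (accPts H) with hadef
  set b : ℝ := sSup (accPts H) with hbdef
  have ha_mem : a ∈ accPts H := hcl.csInf_mem hne hbddB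
  have hb_mem : b ∈ accPts H := hcl.csSup_mem hne hbddA
  have haM : |a| ≤ M := hclos a (accPts_subset_closure H ha_mem)
  have hbM : |b| ≤ M := hclos b (accPts_subset_closure H hb_mem)
  have hinf_le : ∀ z ∈ accPts H, a ≤ z := fun z hz => csInf_le hbddB hz
  have hle_sup : ∀ z ∈ accPts H, z ≤ b := fun z hz => le_csSup hbddA hz
  -- the enumeration of H
  haveI := hc.to_subtype
  haveI := hi.to_subtype
  obtain ⟨d⟩ := nonempty_denumerable ↥H
  set f : ℕ → ℝ := fun n => ((Denumerable.eqv ↥H).symm n : ℝ) with hfdef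
  have hfinj : Function.Injective f := fun m n h =>
    (Denumerable.eqv ↥H).symm.injective (Subtype.val_injective h)
  have hfH : ∀ n, f n ∈ H := fun n => ((Denumerable.eqv ↥H).symm n).2
  have hfsurj : ∀ y ∈ H, ∃ n, f n = y := fun y hy =>
    ⟨(Denumerable.eqv ↥H) ⟨y, hy⟩, by simp [hfdef]⟩
  ext x
  simp only [Set.mem_setOf_eq, Set.mem_Icc, ← hadef, ← hbdef]
  constructor
  · rintro ⟨Hn, hmono, hunion, hlim⟩
    have hmono' : ∀ {m n : ℕ}, m ≤ n → Hn m ⊆ Hn n := by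
      intro m n h
      exact monotone_nat_of_le_succ (f := Hn) hmono h
    have hsub : ∀ n, ↑(Hn n) ⊆ H := fun n =>
      hunion ▸ Set.subset_iUnion (fun k => ((Hn k : Set ℝ))) n
    -- the cardinalities tend to infinity
    have hcard : Tendsto (fun n => (Hn n).card) atTop atTop := by
      rw [tendsto_atTop_atTop]
      intro m
      set t : Finset ℝ := (Finset.range m).image f with htdef
      have htc : t.card = m := by
        rw [htdef, Finset.card_image_of_injective _ hfinj, Finset.card_range]
      have hex : ∀ y : {y // y ∈ t}, ∃ i, (y : ℝ) ∈ Hn i := by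
        intro ⟨y, hy⟩
        obtain ⟨i, -, rfl⟩ := Finset.mem_image.mp (htdef ▸ hy)
        have : f i ∈ ⋃ n, (Hn n : Set ℝ) := hunion.symm ▸ hfH i
        simpa using this
      choose g hg using hex
      refine ⟨t.attach.sup g, fun n hn => ?_⟩
      have hts : t ⊆ Hn n := by
        intro y hy
        exact hmono' (le_trans (Finset.le_sup (Finset.mem_attach t ⟨y, hy⟩)) hn) (hg ⟨y, hy⟩)
      calc m = t.card := htc.symm
      _ ≤ (Hn n).card := Finset.card_le_card hts
    have hcardR : Tendsto (fun n => ((Hn n).card : ℝ)) atTop atTop :=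
      (tendsto_natCast_atTop_atTop (R := ℝ)).comp hcard
    have key : ∀ ε : ℝ, 0 < ε → a - ε ≤ x ∧ x ≤ b + ε := by
      intro ε hε
      set T : Finset ℝ := (outliers_finite H hbd hε hinf_le hle_sup).toFinset with hTdef
      have hTmem : ∀ y, y ∈ T ↔ (y ∈ H ∧ (y < a - ε ∨ b + ε < y)) := by
        intro y; rw [hTdef, Set.Finite.mem_toFinset]; rfl
      have hbound : ∀ n, 1 ≤ (Hn n).card →
          (a - ε) - (T.card * (|a - ε| + M) + T.card * (|b + ε| + M)) / (Hn n).card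
            ≤ finsetMean (Hn n) ∧
          finsetMean (Hn n)
            ≤ (b + ε) + (T.card * (|a - ε| + M) + T.card * (|b + ε| + M)) / (Hn n).card := by
        intro n hn
        have hN : (0:ℝ) < (Hn n).card := by exact_mod_cast hn
        have hD1 : (0:ℝ) ≤ T.card * (|a - ε| + M) := by positivity
        have hD2 : (0:ℝ) ≤ T.card * (|b + ε| + M) := by positivity
        have hlb := sum_lb (Hn n) T (a - ε) M
          (fun y hy hyT => by
            have hyH : y ∈ H := hsub n hy
            by_contra hlt
            push_neg at hlt
            exact hyT ((hTmem y).mpr ⟨hyH, Or.inl hlt⟩))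
          (fun y hy => (abs_le.mp (hM y (hsub n hy))).1) (le_of_lt hMpos)
        have hub := sum_ub (Hn n) T (b + ε) M
          (fun y hy hyT => by
            have hyH : y ∈ H := hsub n hy
            by_contra hlt
            push_neg at hlt
            exact hyT ((hTmem y).mpr ⟨hyH, Or.inr hlt⟩))
          (fun y hy => (abs_le.mp (hM y (hsub n hy))).2) (le_of_lt hMpos)
        constructor
        · rw [finsetMean, le_div_iff₀ hN, sub_mul, div_mul_cancel₀ _ (ne_of_gt hN)]
          nlinarith
        · rw [finsetMean, div_le_iff₀ hN, add_mul, div_mul_cancel₀ _ (ne_of_gt hN)]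
          nlinarith
      have hDtend : Tendsto
          (fun n => (T.card * (|a - ε| + M) + T.card * (|b + ε| + M)) / ((Hn n).card : ℝ))
          atTop (𝓝 0) :=
        Tendsto.div_atTop tendsto_const_nhds hcardR
      have hev : ∀ᶠ n in atTop, 1 ≤ (Hn n).card := hcard.eventually_ge_atTop 1
      constructor
      · have hlow : Tendsto
            (fun n => (a - ε) - (T.card * (|a - ε| + M) + T.card * (|b + ε| + M)) / ((Hn n).card : ℝ))
            atTop (𝓝 ((a - ε) - 0)) := tendsto_const_nhds.sub hDtend
        rw [sub_zero] at hlow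
        exact le_of_tendsto_of_tendsto hlow hlim (hev.mono fun n hn => (hbound n hn).1)
      · have hhigh : Tendsto
            (fun n => (b + ε) + (T.card * (|a - ε| + M) + T.card * (|b + ε| + M)) / ((Hn n).card : ℝ))
            atTop (𝓝 ((b + ε) + 0)) := tendsto_const_nhds.add hDtend
        rw [add_zero] at hhigh
        exact le_of_tendsto_of_tendsto hlim hhigh (hev.mono fun n hn => (hbound n hn).2)
    constructor
    · by_contra h
      push_neg at h
      have := (key ((a - x)/2) (by linarith)).1
      linarith
    · by_contra h
      push_neg at h
      have := (key ((x - b)/2) (by linarith)).2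
      linarith
  · rintro ⟨hax, hxb⟩
    have hxM : |x| ≤ M := abs_le.mpr ⟨by
      have := (abs_le.mp haM).1; linarith, by
      have := (abs_le.mp hbM).2; linarith⟩
    set δ : ℕ → ℝ := fun n => 8 * M / (n + 1) with hδdef
    have hδpos : ∀ n, 0 < δ n := fun n => by
      rw [hδdef]; positivity
    have hstage : ∀ (n : ℕ) (G : Finset ℝ), ↑G ⊆ H → (∀ i < n, f i ∈ G) →
        ∃ G', insert (f n) G ⊆ G' ∧ ↑G' ⊆ H ∧ |finsetMean G' - x| ≤ δ n := by
      intro n G hGH hfi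
      set G1 := insert (f n) G with hG1def
      have hG1H : ↑G1 ⊆ H := by
        rw [hG1def, Finset.coe_insert]; exact Set.insert_subset (hfH n) hGH
      have hsub1 : (Finset.range (n+1)).image f ⊆ G1 := by
        intro y hy
        obtain ⟨i, hi', rfl⟩ := Finset.mem_image.mp hy
        rcases Nat.lt_succ_iff_lt_or_eq.mp (Finset.mem_range.mp hi') with h | rfl
        · exact Finset.mem_insert_of_mem (hfi i h)
        · exact Finset.mem_insert_self _ _
      have hcard1 : n + 1 ≤ G1.card := by
        calc n + 1 = ((Finset.range (n+1)).image f).card := by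
              rw [Finset.card_image_of_injective _ hfinj, Finset.card_range]
        _ ≤ G1.card := Finset.card_le_card hsub1
      have hcard1R : (n + 1 : ℝ) ≤ G1.card := by exact_mod_cast hcard1
      have h2M : 2 * M ≤ G1.card * δ n := by
        have he : (n+1 : ℝ) * (8 * M / (n+1)) = 8 * M := by
          field_simp
        calc 2 * M ≤ 8 * M := by linarith
        _ = (n+1 : ℝ) * (8 * M / (n+1)) := he.symm
        _ ≤ G1.card * (8 * M / (n+1)) :=
          mul_le_mul_of_nonneg_right hcard1R (le_of_lt (hδpos n))
      obtain ⟨G', h1, h2, h3, h4⟩ := corrector H M x a b (δ n) (hδpos n) hMpos hM hxM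
        ha_mem hax hb_mem hxb G1 hG1H h2M
      exact ⟨G', h1, h2, abs_le.mpr ⟨by linarith, by linarith⟩⟩
    set P : ℕ → Finset ℝ → Finset ℝ → Prop := fun n G G' =>
      insert (f n) G ⊆ G' ∧ ↑G' ⊆ H ∧ |finsetMean G' - x| ≤ δ n with hPdef
    set step : ℕ → Finset ℝ → Finset ℝ := fun n G =>
      if h : ∃ G', P n G G' then h.choose else ∅ with hstepdef
    set F : ℕ → Finset ℝ := fun n => Nat.rec ∅ (fun n G => step n G) n with hFdef
    have hF0 : F 0 = ∅ := rfl
    have hFs : ∀ n, F (n+1) = step n (F n) := fun n => rfl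
    have key : ∀ n, ↑(F n) ⊆ H ∧ ∀ i < n, f i ∈ F n := by
      intro n
      induction n with
      | zero => exact ⟨by simp [hF0], fun i h => absurd h (Nat.not_lt_zero i)⟩
      | succ n ih =>
        have hex : ∃ G', P n (F n) G' := hstage n (F n) ih.1 ih.2
        have heq : F (n+1) = hex.choose := by
          rw [hFs, hstepdef]; exact dif_pos hex
        obtain ⟨hp1, hp2, hp3⟩ := hex.choose_spec
        rw [heq]
        refine ⟨hp2, fun i hi => ?_⟩
        rcases Nat.lt_succ_iff_lt_or_eq.mp hi with h | rfl
        · exact hp1 (Finset.mem_insert_of_mem (ih.2 i h))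
        · exact hp1 (Finset.mem_insert_self _ _)
    have hprop : ∀ n, insert (f n) (F n) ⊆ F (n+1) ∧ ↑(F (n+1)) ⊆ H ∧
        |finsetMean (F (n+1)) - x| ≤ δ n := by
      intro n
      have hex : ∃ G', P n (F n) G' := hstage n (F n) (key n).1 (key n).2
      have heq : F (n+1) = hex.choose := by
        rw [hFs, hstepdef]; exact dif_pos hex
      rw [heq]
      exact hex.choose_spec
    refine ⟨F, fun n => (Finset.subset_insert _ _).trans (hprop n).1, ?_, ?_⟩
    · apply Set.eq_of_subset_of_subset
      · exact Set.iUnion_subset fun n => (key n).1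
      · intro y hy
        obtain ⟨i, rfl⟩ := hfsurj y hy
        exact Set.mem_iUnion.mpr ⟨i+1, (key (i+1)).2 i (Nat.lt_succ_self i)⟩
    · rw [← tendsto_add_atTop_iff_nat 1]
      rw [tendsto_iff_dist_tendsto_zero]
      have hδtend : Tendsto δ atTop (𝓝 0) := by
        have h1 : Tendsto (fun n : ℕ => 8 * M * (1 / (n + 1))) atTop (𝓝 (8 * M * 0)) :=
          tendsto_const_nhds.mul tendsto_one_div_add_atTop_nhds_zero_nat
        rw [mul_zero] at h1
        convert h1 using 2 with n
        rw [hδdef]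
        ring
      refine squeeze_zero (fun n => dist_nonneg) (fun n => ?_) hδtend
      rw [Real.dist_eq]
      exact (hprop n).2.2
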